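/- Let N ≥ 1 and let λ : Fin N → ℝ be strictly positive, with modified Rényi entropy S̃(n) = log(Σ_k λ_k^n) − n·(Σ_k λ_k^n log λ_k)/(Σ_k λ_k^n). Then for every n > 0 the derivative satisfies S̃'(n) ≤ 0, and S̃'(n) = 0 if and only if the spectrum is flat, i.e. λ_k = λ_l for all indices k, l. -/

import Mathlib

open scoped BigOperators

/-- The modified Rényi entropy `S̃(n) = log(Σ_k λ_k^n) − n·(Σ_k λ_k^n log λ_k)/(Σ_k λ_k^n)`
of a strictly positive vector `λ`, as a function of a real variable `n`. -/
noncomputable def modifiedRenyi {N : ℕ} (lam : Fin N → ℝ) (n : ℝ) : ℝ :=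
  Real.log (∑ k, lam k ^ n) -
    n * (∑ k, lam k ^ n * Real.log (lam k)) / (∑ k, lam k ^ n)

/-- For a strictly positive vector `λ : Fin N → ℝ` (`N ≥ 1`) and every `n > 0`,
the derivative of the modified Rényi entropy satisfies `S̃'(n) ≤ 0`, with equality if and only if
the spectrum is flat, i.e. `λ_k = λ_l` for all `k, l`. -/
theorem deriv_modifiedRenyi_nonpos_and_eq_zero_iff_flat {N : ℕ} (hN : 1 ≤ N)
    (lam : Fin N → ℝ) (hpos : ∀ k, 0 < lam k) (n : ℝ) (hn : 0 < n) :
    deriv (modifiedRenyi lam) n ≤ 0 ∧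
      (deriv (modifiedRenyi lam) n = 0 ↔ ∀ k l, lam k = lam l) := by
  haveI : Nonempty (Fin N) := Fin.pos_iff_nonempty.mp hN
  set L : Fin N → ℝ := fun k => Real.log (lam k) with hL
  set Z : ℝ → ℝ := fun m => ∑ k, lam k ^ m with hZdef
  set A : ℝ → ℝ := fun m => ∑ k, lam k ^ m * L k with hAdef
  set w : Fin N → ℝ := fun k => lam k ^ n with hw
  have hwpos : ∀ k, 0 < w k := fun k => Real.rpow_pos_of_pos (hpos k) n
  set Bn : ℝ := ∑ k, w k * L k ^ 2 with hBn
  have hZpos : 0 < Z n := Finset.sum_pos (fun k _ => hwpos k) Finset.univ_nonempty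
  have hZne : Z n ≠ 0 := ne_of_gt hZpos
  -- derivatives
  have hZd : HasDerivAt Z (A n) n := by
    apply HasDerivAt.fun_sum
    intro k _
    simpa [mul_comm] using
      (Real.hasStrictDerivAt_const_rpow (hpos k) n).hasDerivAt
  have hAd : HasDerivAt A Bn n := by
    rw [hBn]
    apply HasDerivAt.fun_sum
    intro k _
    have := ((Real.hasStrictDerivAt_const_rpow (hpos k) n).hasDerivAt).mul_const (L k)
    convert this using 1
    · rfl
    simp [hw]; ring
  have hS : HasDerivAt (modifiedRenyi lam)
      (A n / Z n - ((1 * A n + n * Bn) * Z n - (n * A n) * A n) / (Z n) ^ 2) n := by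
    have h1 : HasDerivAt (fun m => Real.log (Z m)) (A n / Z n) n := hZd.log hZne
    have h2 : HasDerivAt (fun m => m * A m / Z m)
        (((1 * A n + n * Bn) * Z n - (n * A n) * A n) / (Z n) ^ 2) n :=
      ((hasDerivAt_id n).mul hAd).div hZd hZne
    exact h1.sub h2
  have hderiv : deriv (modifiedRenyi lam) n = -(n * (Bn * Z n - (A n) ^ 2)) / (Z n) ^ 2 := by
    rw [hS.deriv]
    field_simp
    ring
  -- the key identity
  have hD : ∑ k, ∑ l, w k * w l * (L k - L l) ^ 2 = 2 * (Bn * Z n - (A n) ^ 2) := by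
    have h1 : Bn * Z n = ∑ k, ∑ l, (w k * L k ^ 2) * w l := Fintype.sum_mul_sum _ _
    have h2 : Z n * Bn = ∑ k, ∑ l, w k * (w l * L l ^ 2) := Fintype.sum_mul_sum _ _
    have h3 : A n * A n = ∑ k, ∑ l, (w k * L k) * (w l * L l) := Fintype.sum_mul_sum _ _
    have expand : ∀ k l : Fin N, w k * w l * (L k - L l) ^ 2 =
        (w k * L k ^ 2) * w l - 2 * ((w k * L k) * (w l * L l)) + w k * (w l * L l ^ 2) := by
      intros; ring
    calc ∑ k, ∑ l, w k * w l * (L k - L l) ^ 2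
        = ∑ k, ∑ l, ((w k * L k ^ 2) * w l - 2 * ((w k * L k) * (w l * L l))
            + w k * (w l * L l ^ 2)) := by
          exact Finset.sum_congr rfl fun k _ => Finset.sum_congr rfl fun l _ => expand k l
      _ = (∑ k, ∑ l, (w k * L k ^ 2) * w l) - 2 * (∑ k, ∑ l, (w k * L k) * (w l * L l))
            + (∑ k, ∑ l, w k * (w l * L l ^ 2)) := by
          simp only [Finset.sum_sub_distrib, Finset.sum_add_distrib, ← Finset.mul_sum]
      _ = Bn * Z n - 2 * (A n * A n) + Z n * Bn := by rw [← h1, ← h2, ← h3]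
      _ = 2 * (Bn * Z n - (A n) ^ 2) := by ring
  have hDnonneg : 0 ≤ Bn * Z n - (A n) ^ 2 := by
    have : 0 ≤ ∑ k, ∑ l, w k * w l * (L k - L l) ^ 2 :=
      Finset.sum_nonneg fun k _ => Finset.sum_nonneg fun l _ =>
        mul_nonneg (mul_pos (hwpos k) (hwpos l)).le (sq_nonneg _)
    linarith [hD ▸ this]
  have hflat : Bn * Z n - (A n) ^ 2 = 0 ↔ ∀ k l, lam k = lam l := by
    constructor
    · intro h0
      have hDzero : ∑ k, ∑ l, w k * w l * (L k - L l) ^ 2 = 0 := by rw [hD, h0]; ring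
      intro k l
      have hkl : w k * w l * (L k - L l) ^ 2 = 0 := by
        have h1 := (Finset.sum_eq_zero_iff_of_nonneg
          (fun k _ => Finset.sum_nonneg fun l _ =>
            mul_nonneg (mul_pos (hwpos k) (hwpos l)).le (sq_nonneg _))).mp hDzero k
          (Finset.mem_univ k)
        exact (Finset.sum_eq_zero_iff_of_nonneg (fun l _ =>
          mul_nonneg (mul_pos (hwpos k) (hwpos l)).le (sq_nonneg _))).mp h1 l
          (Finset.mem_univ l)
      have hL0 : L k = L l := by
        have hwne : w k * w l ≠ 0 := ne_of_gt (mul_pos (hwpos k) (hwpos l))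
        have : (L k - L l) ^ 2 = 0 := by
          rcases mul_eq_zero.mp hkl with h | h
          · exact absurd h hwne
          · exact h
        nlinarith [this]
      have := Real.exp_log (hpos k) ▸ Real.exp_log (hpos l) ▸ congrArg Real.exp hL0
      simpa [hL, Real.exp_log (hpos k), Real.exp_log (hpos l)] using congrArg Real.exp hL0
    · intro hfl
      have : ∑ k, ∑ l, w k * w l * (L k - L l) ^ 2 = 0 := by
        apply Finset.sum_eq_zero; intro k _
        apply Finset.sum_eq_zero; intro l _
        rw [hL]
        simp [hfl k l]
      linarith [hD ▸ this]
  constructor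
  · rw [hderiv]
    apply div_nonpos_of_nonpos_of_nonneg
    · nlinarith
    · positivity
  · rw [hderiv]
    rw [div_eq_zero_iff]
    have hZ2 : (Z n) ^ 2 ≠ 0 := by positivity
    constructor
    · rintro (h | h)
      · have : Bn * Z n - (A n) ^ 2 = 0 := by
          have hn' : n ≠ 0 := ne_of_gt hn
          have := neg_eq_zero.mp h
          exact (mul_eq_zero.mp this).resolve_left hn'
        exact hflat.mp this
      · exact absurd h hZ2
    · intro hfl
      left
      rw [hflat.mpr hfl]
      ring
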